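/- arXiv:0712.3056 — 3 statements merged into one kernel-verified Lean document; each statement's English description precedes it below -/
import Mathlib

section
/- Let X be an N×p real matrix, B a symmetric positive definite p×p matrix, y an N×1 vector, and λ_R > 0. Define A_g = λ_R XᵀX + B and g(λ_R) = (y − λ_R X A_g⁻¹ Xᵀ y)ᵀ(y − λ_R X A_g⁻¹ Xᵀ y) computed as yᵀy + λ_R² yᵀX A_g⁻¹ XᵀX A_g⁻¹ Xᵀy − 2λ_R yᵀX A_g⁻¹ Xᵀy. Then g(λ_R) ≤ yᵀy. -/
open Matrix

private lemma sandwich_aux {m n : ℕ} (X : Matrix (Fin m) (Fin n) ℝ)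
    (M : Matrix (Fin n) (Fin n) ℝ) (y : Fin m → ℝ) :
    y ⬝ᵥ (X * M * Xᵀ) *ᵥ y = (Xᵀ *ᵥ y) ⬝ᵥ M *ᵥ (Xᵀ *ᵥ y) := by
  simp only [dotProduct_mulVec, vecMul_vecMul, mulVec_transpose]
  conv_rhs => rw [← mulVec_transpose X y, dotProduct_mulVec, vecMul_vecMul]

private lemma xtx_aux {m n : ℕ} (X : Matrix (Fin m) (Fin n) ℝ) (v : Fin n → ℝ) :
    v ⬝ᵥ (Xᵀ * X) *ᵥ v = (X *ᵥ v) ⬝ᵥ (X *ᵥ v) := by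
  rw [← mulVec_mulVec, dotProduct_mulVec, vecMul_transpose]

theorem g_le_yty {N p : ℕ} (X : Matrix (Fin N) (Fin p) ℝ) (B : Matrix (Fin p) (Fin p) ℝ)
    (y : Fin N → ℝ) (lR : ℝ) (hlR : 0 < lR) (hB : B.PosDef) :
    y ⬝ᵥ y + lR ^ 2 * (y ⬝ᵥ (X * (lR • (Xᵀ * X) + B)⁻¹ * Xᵀ * X * (lR • (Xᵀ * X) + B)⁻¹ * Xᵀ).mulVec y)
      - 2 * lR * (y ⬝ᵥ (X * (lR • (Xᵀ * X) + B)⁻¹ * Xᵀ).mulVec y) ≤ y ⬝ᵥ y := by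
  set A := lR • (Xᵀ * X) + B with hAdef
  have hXX : (Xᵀ * X).PosSemidef := by
    have := posSemidef_conjTranspose_mul_self X
    simpa using this
  have hsXX : (lR • (Xᵀ * X)).PosSemidef := by
    refine .of_dotProduct_mulVec_nonneg ?_ fun x => ?_
    · unfold Matrix.IsHermitian
      rw [conjTranspose_smul]
      simp [hXX.isHermitian.eq]
    · rw [smul_mulVec, dotProduct_smul, smul_eq_mul]
      have := hXX.dotProduct_mulVec_nonneg x
      simp only [star_trivial] at this
      positivity
  have hA : A.PosDef := Matrix.PosDef.posSemidef_add hsXX hB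
  have hUnit : IsUnit A.det := isUnit_iff_ne_zero.mpr hA.det_pos.ne'
  have hAsym : Aᵀ = A := by
    have := hA.isHermitian.eq
    simpa using this
  have hAinvSym : (A⁻¹)ᵀ = A⁻¹ := by
    rw [transpose_nonsing_inv, hAsym]
  set u : Fin p → ℝ := Xᵀ *ᵥ y with hu
  set v : Fin p → ℝ := A⁻¹ *ᵥ u with hv
  have hAv : A *ᵥ v = u := by
    rw [hv, mulVec_mulVec, mul_nonsing_inv A hUnit, one_mulVec]
  have hterm2 : y ⬝ᵥ (X * A⁻¹ * Xᵀ) *ᵥ y = u ⬝ᵥ v := by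
    rw [sandwich_aux, ← hu, ← hv, dotProduct_mulVec, ← mulVec_transpose, hAinvSym,
      dotProduct_comm, ← hv, dotProduct_comm]
  have hterm1 : y ⬝ᵥ (X * A⁻¹ * Xᵀ * X * A⁻¹ * Xᵀ) *ᵥ y = (X *ᵥ v) ⬝ᵥ (X *ᵥ v) := by
    have hre : X * A⁻¹ * Xᵀ * X * A⁻¹ * Xᵀ = X * (A⁻¹ * (Xᵀ * X) * (A⁻¹)ᵀ) * Xᵀ := by
      rw [hAinvSym]; simp only [Matrix.mul_assoc]
    rw [hre, sandwich_aux, ← hu, sandwich_aux A⁻¹ (Xᵀ * X) u, hAinvSym, ← hv, xtx_aux]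
  have huv : u ⬝ᵥ v = lR * ((X *ᵥ v) ⬝ᵥ (X *ᵥ v)) + v ⬝ᵥ B *ᵥ v := by
    rw [← hAv, dotProduct_comm, hAdef, add_mulVec, dotProduct_add, smul_mulVec,
      dotProduct_smul, smul_eq_mul, xtx_aux]
  have hs : 0 ≤ (X *ᵥ v) ⬝ᵥ (X *ᵥ v) :=
    Finset.sum_nonneg fun i _ => mul_self_nonneg _
  have hb : 0 ≤ v ⬝ᵥ B *ᵥ v := by
    have := hB.posSemidef.dotProduct_mulVec_nonneg v
    simpa using this
  rw [hterm1, hterm2, huv]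
  nlinarith [hs, hb, sq_nonneg lR]
end

section
/- Let Z be an N×k real matrix with ZᵀZ nonsingular, y an N×1 vector, and λ_R, λ_D > 0. Define A_h = λ_R ZᵀZ + λ_D I_k and h(λ) = λ_R² yᵀZ A_h⁻¹ ZᵀZ A_h⁻¹ Zᵀy + λ_R² yᵀZ A_h⁻² Zᵀy − 2λ_R yᵀZ A_h⁻¹ Zᵀy. Then h(λ) ≤ yᵀZ (ZᵀZ)⁻² Zᵀ y. -/
open Matrix

theorem h_le_bound {N k : ℕ} (Z : Matrix (Fin N) (Fin k) ℝ) (y : Fin N → ℝ)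
    (lR lD : ℝ) (hlR : 0 < lR) (hlD : 0 < lD) (hZ : IsUnit (Zᵀ * Z).det) :
    lR ^ 2 * (y ⬝ᵥ (Z * (lR • (Zᵀ * Z) + lD • 1)⁻¹ * (Zᵀ * Z) * (lR • (Zᵀ * Z) + lD • 1)⁻¹ * Zᵀ).mulVec y)
      + lR ^ 2 * (y ⬝ᵥ (Z * ((lR • (Zᵀ * Z) + lD • 1)⁻¹ * (lR • (Zᵀ * Z) + lD • 1)⁻¹) * Zᵀ).mulVec y)
      - 2 * lR * (y ⬝ᵥ (Z * (lR • (Zᵀ * Z) + lD • 1)⁻¹ * Zᵀ).mulVec y)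
      ≤ y ⬝ᵥ (Z * ((Zᵀ * Z)⁻¹ * (Zᵀ * Z)⁻¹) * Zᵀ).mulVec y := by
  set B : Matrix (Fin k) (Fin k) ℝ := Zᵀ * Z with hB
  set A : Matrix (Fin k) (Fin k) ℝ := lR • B + lD • 1 with hA
  -- basic facts
  have hBpsd : B.PosSemidef := by
    simpa [hB] using Matrix.posSemidef_conjTranspose_mul_self Z
  have hBherm : Bᵀ = B := by
    simp [hB, Matrix.transpose_mul]
  have hApd : A.PosDef := by
    refine Matrix.PosDef.of_dotProduct_mulVec_pos ?_ (fun x hx => ?_)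
    · have h1 : B.IsHermitian := hBpsd.1
      simp only [hA, Matrix.IsHermitian] at *
      simp [Matrix.conjTranspose_add, Matrix.conjTranspose_smul, h1, hBherm]
    · have h1 : 0 ≤ star x ⬝ᵥ B *ᵥ x := hBpsd.dotProduct_mulVec_nonneg x
      have h2 : (0:ℝ) < star x ⬝ᵥ x := by
        simpa using Matrix.dotProduct_star_self_pos_iff.mpr hx
      have : star x ⬝ᵥ A *ᵥ x = lR * (star x ⬝ᵥ B *ᵥ x) + lD * (star x ⬝ᵥ x) := by
        simp [hA, Matrix.add_mulVec, Matrix.smul_mulVec, Matrix.one_mulVec,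
          dotProduct_add, dotProduct_smul, smul_eq_mul]
      rw [this]
      have := mul_nonneg hlR.le h1
      nlinarith
  have hAdet : IsUnit A.det := hApd.det_pos.ne'.isUnit
  set P : Matrix (Fin k) (Fin k) ℝ := A⁻¹ with hP
  set Q : Matrix (Fin k) (Fin k) ℝ := B⁻¹ with hQ
  have hPA : P * A = 1 := Matrix.nonsing_inv_mul A hAdet
  have hAP : A * P = 1 := Matrix.mul_nonsing_inv A hAdet
  have hQB : Q * B = 1 := Matrix.nonsing_inv_mul B hZ
  have hBQ : B * Q = 1 := Matrix.mul_nonsing_inv B hZ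
  have hAB : A * B = B * A := by
    simp [hA, Matrix.add_mul, Matrix.mul_add, Matrix.smul_mul, Matrix.mul_smul]
  have hPB : P * B = B * P := by
    calc P * B = P * B * (A * P) := by rw [hAP, Matrix.mul_one]
    _ = P * (B * A) * P := by noncomm_ring
    _ = P * (A * B) * P := by rw [hAB]
    _ = (P * A) * (B * P) := by noncomm_ring
    _ = B * P := by rw [hPA, Matrix.one_mul]
  have hPQ : P * Q = Q * P := by
    calc P * Q = (Q * B) * P * Q := by rw [hQB, Matrix.one_mul]
    _ = Q * (B * P) * Q := by noncomm_ring
    _ = Q * (P * B) * Q := by rw [hPB]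
    _ = Q * P * (B * Q) := by noncomm_ring
    _ = Q * P := by rw [hBQ, Matrix.mul_one]
  have hPt : Pᵀ = P := by
    rw [hP, Matrix.transpose_nonsing_inv]
    congr 1
    simp [hA, Matrix.transpose_add, Matrix.transpose_smul, hBherm]
  have hQt : Qᵀ = Q := by
    rw [hQ, Matrix.transpose_nonsing_inv, hBherm]
  -- quadratic form
  set v : Fin k → ℝ := Zᵀ *ᵥ y with hv
  have hform : ∀ M : Matrix (Fin k) (Fin k) ℝ,
      y ⬝ᵥ (Z * M * Zᵀ) *ᵥ y = v ⬝ᵥ M *ᵥ v := by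
    intro M
    rw [show Z * M * Zᵀ = Z * (M * Zᵀ) by rw [Matrix.mul_assoc]]
    rw [← Matrix.mulVec_mulVec, ← Matrix.mulVec_mulVec, Matrix.dotProduct_mulVec,
      ← Matrix.mulVec_transpose]
  -- nonnegativity facts
  have hPpsd : P.PosSemidef := hApd.inv.posSemidef
  have hQpsd : Q.PosSemidef := by
    have : B.PosDef := by
      refine Matrix.PosDef.of_dotProduct_mulVec_pos hBpsd.1 (fun x hx => ?_)
      rcases (hBpsd.dotProduct_mulVec_nonneg x).lt_or_eq with h | h
      · exact h
      · exfalso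
        apply hx
        have hZx : Z *ᵥ x = 0 := by
          have h2 : (Z *ᵥ x) ⬝ᵥ (Z *ᵥ x) = 0 := by
            have : star x ⬝ᵥ B *ᵥ x = (Z *ᵥ x) ⬝ᵥ (Z *ᵥ x) := by
              rw [hB, ← Matrix.mulVec_mulVec, Matrix.dotProduct_mulVec, star_trivial,
                Matrix.vecMul_transpose]
            rw [this] at h
            exact h.symm
          ext i
          have := fun j => mul_self_nonneg ((Z *ᵥ x) j)
          have hsum : ∑ j, (Z *ᵥ x) j * (Z *ᵥ x) j = 0 := h2
          have := (Finset.sum_eq_zero_iff_of_nonneg (fun j _ => mul_self_nonneg _)).mp hsum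
            i (Finset.mem_univ i)
          simpa [mul_self_eq_zero] using this
        have hBx : B *ᵥ x = 0 := by
          rw [hB, ← Matrix.mulVec_mulVec, hZx, Matrix.mulVec_zero]
        have := congrArg (fun w => Q *ᵥ w) hBx
        simpa [Matrix.mulVec_mulVec, hQB, Matrix.one_mulVec, Matrix.mulVec_zero] using this
    exact this.inv.posSemidef
  have hq : ∀ M : Matrix (Fin k) (Fin k) ℝ, M.PosSemidef → 0 ≤ v ⬝ᵥ M *ᵥ v := by
    intro M hM
    simpa using hM.dotProduct_mulVec_nonneg v
  have h1 : 0 ≤ v ⬝ᵥ P *ᵥ v := hq P hPpsd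
  have hPh : Pᴴ = P := by rw [Matrix.conjTranspose_eq_transpose_of_trivial, hPt]
  have hQh : Qᴴ = Q := by rw [Matrix.conjTranspose_eq_transpose_of_trivial, hQt]
  have h2 : 0 ≤ v ⬝ᵥ (P * P) *ᵥ v := by
    have hps : (Pᴴ * P).PosSemidef := Matrix.posSemidef_conjTranspose_mul_self P
    rw [hPh] at hps
    exact hq _ hps
  have h3 : 0 ≤ v ⬝ᵥ (Q * P * Q) *ᵥ v := by
    have hps := hPpsd.conjTranspose_mul_mul_same Q
    rw [hQh] at hps
    exact hq _ hps
  have h4 : 0 ≤ v ⬝ᵥ (P * Q * P) *ᵥ v := by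
    have hps := hQpsd.conjTranspose_mul_mul_same P
    rw [hPh] at hps
    exact hq _ hps
  -- identity 1 : lR • (P*B*P) = P - lD • (P*P)
  have hlRB : lR • B = A - lD • (1 : Matrix (Fin k) (Fin k) ℝ) := by
    rw [hA]; abel
  have I1 : lR • (P * B * P) = P - lD • (P * P) := by
    calc lR • (P * B * P) = P * (lR • B) * P := by
          rw [Matrix.mul_smul, Matrix.smul_mul]
    _ = P * (A - lD • 1) * P := by rw [hlRB]
    _ = P * A * P - lD • (P * P) := by
          rw [Matrix.mul_sub, Matrix.sub_mul, Matrix.mul_smul, Matrix.smul_mul,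
            Matrix.mul_one]
    _ = P - lD • (P * P) := by rw [hPA, Matrix.one_mul]
  -- identity 2 : Q*Q - lR^2 • (P*P) = lD • (Q*P*Q) + (lD*lR) • (P*Q*P)
  have hQsub : Q - lR • P = lD • (P * Q) := by
    have hAQ : A * Q = lR • (1 : Matrix (Fin k) (Fin k) ℝ) + lD • Q := by
      rw [hA, Matrix.add_mul, Matrix.smul_mul, Matrix.smul_mul, hBQ, Matrix.one_mul]
    calc Q - lR • P = P * (A * Q) - lR • P := by
          rw [← Matrix.mul_assoc, hPA, Matrix.one_mul]
    _ = P * (lR • 1 + lD • Q) - lR • P := by rw [hAQ]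
    _ = lR • P + lD • (P * Q) - lR • P := by
          rw [Matrix.mul_add, Matrix.mul_smul, Matrix.mul_smul, Matrix.mul_one]
    _ = lD • (P * Q) := by abel
  have I2 : Q * Q - (lR ^ 2) • (P * P) = lD • (Q * P * Q) + (lD * lR) • (P * Q * P) := by
    have e1 : Q * Q - (lR ^ 2) • (P * P) = (Q - lR • P) * Q + lR • (P * (Q - lR • P)) := by
      simp only [Matrix.sub_mul, Matrix.mul_sub, Matrix.smul_mul, Matrix.mul_smul, smul_sub,
        smul_smul]
      rw [pow_two]
      abel
    rw [e1, hQsub, Matrix.smul_mul, Matrix.mul_smul, smul_smul]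
    have c1 : P * Q * Q = Q * P * Q := by rw [hPQ]
    have c2 : P * (P * Q) = P * Q * P := by conv_lhs => rw [hPQ, ← Matrix.mul_assoc]
    rw [c1, c2, mul_comm lR lD]
  -- convert goal to quadratic forms
  rw [show Z * P * B * P * Zᵀ = Z * (P * B * P) * Zᵀ by simp only [Matrix.mul_assoc]]
  rw [hform (P * B * P), hform (P * P), hform P, hform (Q * Q)]
  -- scalar versions of the identities
  have qI1 : lR * (v ⬝ᵥ (P * B * P) *ᵥ v) = v ⬝ᵥ P *ᵥ v - lD * (v ⬝ᵥ (P * P) *ᵥ v) := by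
    have := congrArg (fun M : Matrix (Fin k) (Fin k) ℝ => v ⬝ᵥ M *ᵥ v) I1
    simpa [Matrix.smul_mulVec, Matrix.sub_mulVec, dotProduct_sub, dotProduct_smul,
      smul_eq_mul] using this
  have qI2 : v ⬝ᵥ (Q * Q) *ᵥ v - lR ^ 2 * (v ⬝ᵥ (P * P) *ᵥ v)
      = lD * (v ⬝ᵥ (Q * P * Q) *ᵥ v) + (lD * lR) * (v ⬝ᵥ (P * Q * P) *ᵥ v) := by
    have := congrArg (fun M : Matrix (Fin k) (Fin k) ℝ => v ⬝ᵥ M *ᵥ v) I2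
    simpa [Matrix.smul_mulVec, Matrix.sub_mulVec, Matrix.add_mulVec, dotProduct_sub,
      dotProduct_add, dotProduct_smul, smul_eq_mul] using this
  nlinarith [mul_nonneg hlD.le h3, mul_nonneg (mul_nonneg hlD.le hlR.le) h4,
    mul_nonneg hlR.le h1, mul_nonneg (mul_nonneg hlR.le hlD.le) h2]
end

section
/- Let V : ℝ^{k+p} → ℝ be defined by V(ξ) = v₁(ξ) + v₂(ξ) where, writing ξ = (uᵀ, βᵀ)ᵀ with u ∈ ℝᵏ and β ∈ ℝᵖ, v₁(ξ) = (y − Xβ − Zu)ᵀ(y − Xβ − Zu) and v₂(ξ) = uᵀu, with X an N×p matrix of full column rank p and Z an N×k matrix. Then V is unbounded off compact sets: for every d > 0, the sublevel set {ξ : V(ξ) ≤ d} is compact. -/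
open Matrix

/-- The drift function `V(ξ) = v₁(ξ) + v₂(ξ)` is unbounded off compact sets. -/
theorem drift_function_unbounded_off_compact {N k p : ℕ}
    (X : Matrix (Fin N) (Fin p) ℝ) (Z : Matrix (Fin N) (Fin k) ℝ) (y : Fin N → ℝ)
    (hX : X.rank = p) (d : ℝ) (hd : 0 < d) :
    IsCompact {ξ : (Fin k → ℝ) × (Fin p → ℝ) |
      (y - X.mulVec ξ.2 - Z.mulVec ξ.1) ⬝ᵥ (y - X.mulVec ξ.2 - Z.mulVec ξ.1)
        + ξ.1 ⬝ᵥ ξ.1 ≤ d} := by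
  -- X.mulVec is injective
  have hker : LinearMap.ker X.mulVecLin = ⊥ := by
    have h1 := LinearMap.finrank_range_add_finrank_ker X.mulVecLin
    rw [Module.finrank_pi ℝ] at h1
    have h2 : Module.finrank ℝ (LinearMap.range X.mulVecLin) = p := by
      rw [← Matrix.rank, hX]
    simp only [Fintype.card_fin] at h1
    have h3 : Module.finrank ℝ (LinearMap.ker X.mulVecLin) = 0 := by omega
    exact Submodule.finrank_eq_zero.mp h3
  -- the linear map L ξ = (X β + Z u, u)
  set L : ((Fin k → ℝ) × (Fin p → ℝ)) →ₗ[ℝ] ((Fin N → ℝ) × (Fin k → ℝ)) :=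
    LinearMap.prod
      (X.mulVecLin.comp (LinearMap.snd ℝ _ _) + Z.mulVecLin.comp (LinearMap.fst ℝ _ _))
      (LinearMap.fst ℝ _ _) with hL
  have hLinj : LinearMap.ker L = ⊥ := by
    rw [LinearMap.ker_eq_bot']
    intro ξ hξ
    rw [hL] at hξ
    simp only [LinearMap.prod_apply, LinearMap.add_apply, LinearMap.comp_apply,
      LinearMap.fst_apply, LinearMap.snd_apply, Function.prod, Prod.mk_eq_zero] at hξ
    obtain ⟨h1, h2⟩ := hξ
    have h4 : X.mulVecLin ξ.2 = 0 := by
      rw [h2] at h1; simpa using h1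
    have h5 : ξ.2 = 0 := by
      rw [← LinearMap.mem_ker, hker] at h4; simpa using h4
    exact Prod.ext h2 h5
  have hLemb : Topology.IsClosedEmbedding L := L.isClosedEmbedding_of_injective hLinj
  -- the compact target set
  set K : Set ((Fin N → ℝ) × (Fin k → ℝ)) :=
    {wu | (y - wu.1) ⬝ᵥ (y - wu.1) + wu.2 ⬝ᵥ wu.2 ≤ d} with hK
  have hKcomp : IsCompact K := by
    apply Metric.isCompact_of_isClosed_isBounded
    · apply isClosed_le _ continuous_const
      apply Continuous.add <;>
      · simp only [dotProduct]
        apply continuous_finset_sum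
        intro i _
        fun_prop
    · rw [Metric.isBounded_iff_subset_closedBall 0]
      refine ⟨‖y‖ + Real.sqrt d, fun wu hwu => ?_⟩
      simp only [hK, Set.mem_setOf_eq] at hwu
      have hnn1 : (0:ℝ) ≤ (y - wu.1) ⬝ᵥ (y - wu.1) :=
        Finset.sum_nonneg fun i _ => mul_self_nonneg _
      have hnn2 : (0:ℝ) ≤ wu.2 ⬝ᵥ wu.2 :=
        Finset.sum_nonneg fun i _ => mul_self_nonneg _
      have hb1 : (y - wu.1) ⬝ᵥ (y - wu.1) ≤ d := by linarith
      have hb2 : wu.2 ⬝ᵥ wu.2 ≤ d := by linarith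
      have key : ∀ {n : ℕ} (v : Fin n → ℝ), v ⬝ᵥ v ≤ d → ‖v‖ ≤ Real.sqrt d := by
        intro n v hv
        rw [pi_norm_le_iff_of_nonneg (Real.sqrt_nonneg d)]
        intro i
        rw [Real.norm_eq_abs]
        apply Real.abs_le_sqrt
        calc v i ^ 2 = v i * v i := sq (v i)
          _ ≤ ∑ j, v j * v j := by
              apply Finset.single_le_sum (fun j _ => mul_self_nonneg (v j)) (Finset.mem_univ i)
          _ = v ⬝ᵥ v := rfl
          _ ≤ d := hv
      have hw : ‖wu.1‖ ≤ ‖y‖ + Real.sqrt d := by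
        have h1 : ‖y - wu.1‖ ≤ Real.sqrt d := key _ hb1
        have h2 : ‖wu.1‖ ≤ ‖y‖ + ‖y - wu.1‖ := by
          have h3 : wu.1 = y - (y - wu.1) := by ring
          calc ‖wu.1‖ = ‖y - (y - wu.1)‖ := by rw [← h3]
            _ ≤ ‖y‖ + ‖y - wu.1‖ := norm_sub_le _ _
        linarith
      have hu : ‖wu.2‖ ≤ ‖y‖ + Real.sqrt d := by
        have h1 := key _ hb2
        have h2 : (0:ℝ) ≤ ‖y‖ := norm_nonneg y
        linarith
      rw [Metric.mem_closedBall, dist_zero_right, Prod.norm_def]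
      exact max_le hw hu
  -- the set is L ⁻¹' K
  have hset : {ξ : (Fin k → ℝ) × (Fin p → ℝ) |
      (y - X.mulVec ξ.2 - Z.mulVec ξ.1) ⬝ᵥ (y - X.mulVec ξ.2 - Z.mulVec ξ.1)
        + ξ.1 ⬝ᵥ ξ.1 ≤ d} = L ⁻¹' K := by
    ext ξ
    simp only [Set.mem_setOf_eq, Set.mem_preimage, hK, hL, LinearMap.prod_apply,
      LinearMap.add_apply, LinearMap.comp_apply, LinearMap.fst_apply, LinearMap.snd_apply,
      Function.prod, mulVecLin_apply]
    have : y - (X.mulVec ξ.2 + Z.mulVec ξ.1) = y - X.mulVec ξ.2 - Z.mulVec ξ.1 := by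
      abel
    rw [this]
  rw [hset]
  exact hLemb.isProperMap.isCompact_preimage hKcomp
end
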